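/- arXiv:2405.03801 — 3 statements merged into one kernel-verified Lean document; each statement's English description precedes it below -/
import Mathlib

section
/- Let T be a DFS tree of a connected undirected graph G rooted at r, and let U be a set of vertices. Call a component C of T \ U internal if the root of C (its vertex closest to r in T) is an ancestor in T of some vertex of U; otherwise C is a hanging subtree. Then for vertices x, y ∉ U, x and y are connected in G \ U if and only if either x and y lie in the same component of T \ U, or there exists an internal component C of T \ U such that both x and y are connected to (a vertex of) C in G \ U. -/
open SimpleGraph

variable {V : Type*}

/-- The graph `G` with the vertices of `S` removed (vertices in `S` become isolated). -/
def delAdj (G : SimpleGraph V) (S : Set V) : SimpleGraph V where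
  Adj u v := G.Adj u v ∧ u ∉ S ∧ v ∉ S
  symm := ⟨fun u v ⟨h, hu, hv⟩ => ⟨h.symm, hv, hu⟩⟩
  loopless := ⟨fun v h => G.loopless.irrefl v h.1⟩

/-- The subgraph of `G` induced on the vertex set `A` (other vertices become isolated). -/
def restrict (G : SimpleGraph V) (A : Set V) : SimpleGraph V where
  Adj u v := G.Adj u v ∧ u ∈ A ∧ v ∈ A
  symm := ⟨fun u v ⟨h, hu, hv⟩ => ⟨h.symm, hv, hu⟩⟩
  loopless := ⟨fun v h => G.loopless.irrefl v h.1⟩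

/-- `C` is a connected component of `G \ S`. -/
def IsComp (G : SimpleGraph V) (S C : Set V) : Prop :=
  ∃ v, v ∉ S ∧ C = {u | (delAdj G S).Reachable v u}

/-- The number of connected components of `G \ S`. -/
noncomputable def numComp (G : SimpleGraph V) (S : Set V) : ℕ :=
  {C : Set V | IsComp G S C}.ncard

/-- The volume of a vertex set `Q`: the number of edges with at least one endpoint in `Q`. -/
noncomputable def vol (G : SimpleGraph V) (Q : Set V) : ℕ :=
  {e ∈ G.edgeSet | ∃ v ∈ Q, v ∈ e}.ncard

/-- `S` is a `k`-shredder: it has `k` vertices and `G \ S` has at least three components. -/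
def IsShredder (G : SimpleGraph V) (k : ℕ) (S : Set V) : Prop :=
  S.ncard = k ∧ 3 ≤ numComp G S

/-- `G` is `k`-vertex-connected: it has more than `k` vertices and stays connected
after removing any set of fewer than `k` vertices. -/
def KConnected (G : SimpleGraph V) (k : ℕ) [Fintype V] : Prop :=
  k < Fintype.card V ∧
    ∀ S : Set V, S.ncard < k → ∀ u v, u ∉ S → v ∉ S → (delAdj G S).Reachable u v

/-- `u` is an ancestor of `v` (or equal to it) in the tree `T` rooted at `r`:
every walk from the root to `v` passes through `u`. -/
def AncOf (T : SimpleGraph V) (r u v : V) : Prop :=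
  ∀ p : T.Walk r v, u ∈ p.support

/-- `IsDFSTree G W r T` : `T` is a spanning tree of the induced graph `G[W]` that can be
produced by a depth-first search from `r ∈ W`:  DFS picks a neighbor `w` of `r`, recursively
explores the whole component of `w` in `G[W \ {r}]`, and then continues from `r` on the rest. -/
inductive IsDFSTree (G : SimpleGraph V) : Set V → V → SimpleGraph V → Prop
  | single (r : V) : IsDFSTree G {r} r ⊥
  | step (W : Set V) (r w : V) (T₁ T₂ : SimpleGraph V)
      (hr : r ∈ W) (hw : w ∈ W) (hadj : G.Adj r w)
      (hT₁ : IsDFSTree G {u | (restrict G (W \ {r})).Reachable w u} w T₁)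
      (hT₂ : IsDFSTree G (W \ {u | (restrict G (W \ {r})).Reachable w u}) r T₂) :
      IsDFSTree G W r (T₁ ⊔ T₂ ⊔ fromEdgeSet {s(r, w)})

/-- `C` is an internal component of `T \ U`: a component whose root (its vertex closest to the
root `r` of `T`, i.e. the vertex of `C` that is an ancestor of all of `C`) is an ancestor of
some vertex of `U`. -/
def InternalComp (T : SimpleGraph V) (r : V) (U C : Set V) : Prop :=
  IsComp T U C ∧ ∃ ρ ∈ C, (∀ v ∈ C, AncOf T r ρ v) ∧ ∃ u ∈ U, AncOf T r ρ u

/-- `Straddles sup A S`: the set `A` (attachments of a bridge, or a candidate) straddles `S`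
with respect to the paths whose supports are `sup i`: on some path an `A`-vertex strictly
precedes an `S`-vertex, and on some path an `A`-vertex strictly succeeds an `S`-vertex. -/
def Straddles [DecidableEq V] {k : ℕ} (sup : Fin k → List V) (A S : Set V) : Prop :=
  (∃ i, ∃ u ∈ A, u ∈ sup i ∧ ∃ s ∈ S, s ∈ sup i ∧
      (sup i).idxOf u < (sup i).idxOf s) ∧
  (∃ j, ∃ v ∈ A, v ∈ sup j ∧ ∃ s ∈ S, s ∈ sup j ∧
      (sup j).idxOf s < (sup j).idxOf v)

/-- `IsBridgeAttach G PiV pedges Γ A` : `Γ` is a bridge of the path system with vertex set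
`PiV` and edge lists `pedges i`, and `A` is its attachment set.  A bridge is either a
connected component of `G \ PiV` (attachments: its neighborhood), or an edge of `G` not on
any of the paths but with both endpoints on the paths (attachments: its two endpoints). -/
def IsBridgeAttach (G : SimpleGraph V) {k : ℕ} (PiV : Set V)
    (pedges : Fin k → List (Sym2 V)) (Γ A : Set V) : Prop :=
  (IsComp G PiV Γ ∧ A = {v | v ∉ Γ ∧ ∃ u ∈ Γ, G.Adj u v}) ∨
  (∃ u v, G.Adj u v ∧ u ∈ PiV ∧ v ∈ PiV ∧ (∀ i, s(u, v) ∉ pedges i) ∧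
    Γ = {u, v} ∧ A = {u, v})

section Helpers

variable {G T : SimpleGraph V} {U A S : Set V}

lemma delAdj_mono {G G' : SimpleGraph V} (h : G ≤ G') (S : Set V) :
    delAdj G S ≤ delAdj G' S := fun _ _ ⟨ha, h1, h2⟩ => ⟨h ha, h1, h2⟩

lemma reach_of_support_avoid {a b : V} (p : T.Walk a b)
    (hp : ∀ z ∈ p.support, z ∉ U) : (delAdj T U).Reachable a b := by
  induction p with
  | nil => exact SimpleGraph.Reachable.refl _
  | cons h q ih =>
      have h1 : (delAdj T U).Adj _ _ :=
        ⟨h, hp _ (by simp), hp _ (by simp [SimpleGraph.Walk.start_mem_support])⟩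
      exact h1.reachable.trans (ih fun z hz => hp _ (by simp [hz]))

lemma restrict_reachable_end {a b : V} (h : (restrict G A).Reachable a b) :
    b = a ∨ b ∈ A := by
  obtain ⟨p⟩ := h
  induction p with
  | nil => exact Or.inl rfl
  | cons h q ih =>
      rcases ih with rfl | hb
      · exact Or.inr h.2.2
      · exact Or.inr hb

lemma anc_trans {r a b c : V} (h1 : AncOf T r a b) (h2 : AncOf T r b c) :
    AncOf T r a c := by
  classical
  intro p
  exact p.support_takeUntil_subset (h2 p) (h1 (p.takeUntil b (h2 p)))

end Helpers
section Positional

open SimpleGraph Walk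

variable [DecidableEq V] {T : SimpleGraph V}

lemma mem_takeUntil_of_mem_dropUntil {s t : V} (p : T.Walk s t)
    (hnd : p.support.Nodup) {a u : V} (ha : a ∈ p.support)
    (hu : u ∈ (p.dropUntil a ha).support) (hne : u ≠ a) (hu' : u ∈ p.support) :
    a ∈ (p.takeUntil u hu').support := by
  induction p with
  | nil =>
      have h1 := Walk.support_dropUntil_subset _ ha hu
      rw [Walk.mem_support_nil_iff] at h1 ha
      exact absurd (h1.trans ha.symm) hne
  | @cons v x t h q ih =>
      by_cases hva : v = a
      · subst hva
        exact Walk.start_mem_support _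
      · have ha' : a ∈ q.support := by
          rcases List.mem_cons.mp (by simpa using ha) with h1 | h1
          · exact absurd h1.symm hva
          · exact h1
        have hdrop : (Walk.cons h q).dropUntil a ha = q.dropUntil a ha' := by
          rw [Walk.dropUntil]
          simp [hva]
        rw [hdrop] at hu
        have hnd' : q.support.Nodup := by
          simp only [Walk.support_cons, List.nodup_cons] at hnd
          exact hnd.2
        have hvnq : v ∉ q.support := by
          simp only [Walk.support_cons, List.nodup_cons] at hnd
          exact hnd.1
        have huv : v ≠ u := by
          intro hh; subst hh
          exact hvnq (Walk.support_dropUntil_subset _ _ hu)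
        have hu'' : u ∈ q.support := by
          rcases List.mem_cons.mp (by simpa using hu') with h1 | h1
          · exact absurd h1.symm huv
          · exact h1
        have htake : (Walk.cons h q).takeUntil u hu' = Walk.cons h (q.takeUntil u hu'') := by
          rw [Walk.takeUntil]
          simp [huv]
        rw [htake, Walk.support_cons]
        exact List.mem_cons_of_mem _ (ih hnd' ha' hu hu'')

lemma end_not_mem_takeUntil {s t : V} (p : T.Walk s t) (hnd : p.support.Nodup)
    {y : V} (hy : y ∈ p.support) (hyt : y ≠ t) :
    t ∉ (p.takeUntil y hy).support := by
  have hspec := p.take_spec hy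
  have := congrArg Walk.support hspec
  rw [Walk.support_append] at this
  rw [← this] at hnd
  have hdisj := List.disjoint_of_nodup_append hnd
  intro hmem
  have ht2 : t ∈ ((p.dropUntil y hy).support).tail := by
    have h3 : t ∈ (p.dropUntil y hy).support := Walk.end_mem_support _
    have h4 : (p.dropUntil y hy).support = y :: ((p.dropUntil y hy).support).tail :=
      Walk.support_eq_cons _
    rw [h4] at h3
    rcases List.mem_cons.mp h3 with h5 | h5
    · exact absurd h5 hyt.symm
    · exact h5
  exact hdisj hmem ht2

end Positional
section Cross

open SimpleGraph Walk

variable {T T₁ T₂ : SimpleGraph V} {W₁ W₂ : Set V} {r w : V}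

lemma cross_walk
    (h1 : ∀ a b, T₁.Adj a b → a ∈ W₁ ∧ b ∈ W₁)
    (h2 : ∀ a b, T₂.Adj a b → a ∈ W₂ ∧ b ∈ W₂)
    (hd : ∀ v, v ∈ W₁ → v ∈ W₂ → False)
    (hr : r ∈ W₂) (hw : w ∈ W₁)
    (hadj : ∀ a b, T.Adj a b → T₁.Adj a b ∨ T₂.Adj a b ∨ s(a, b) = s(r, w))
    {a b : V} (p : T.Walk a b) (hb : b ∈ W₁) :
    (a ∈ W₁ → ∃ q : T₁.Walk a b, q.support ⊆ p.support) ∧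
    (a ∈ W₂ → ∃ q : T₁.Walk w b, q.support ⊆ p.support) := by
  induction p with
  | nil =>
      exact ⟨fun _ => ⟨Walk.nil, by simp⟩, fun ha => absurd (hd _ hb ha) (by simp)⟩
  | @cons a x b h q ih =>
      have ihq := ih hb
      constructor
      · intro haW
        rcases hadj a x h with ht | ht | ht
        · obtain ⟨q', hq'⟩ := ihq.1 (h1 _ _ ht).2
          exact ⟨Walk.cons ht q', by
            intro z hz
            rcases List.mem_cons.mp (by simpa using hz) with h5 | h5
            · simp [h5]
            · exact List.mem_cons_of_mem _ (hq' h5)⟩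
        · exact absurd (hd _ haW (h2 _ _ ht).1) (by simp)
        · rcases Sym2.eq_iff.mp ht with ⟨rfl, rfl⟩ | ⟨rfl, rfl⟩
          · exact absurd (hd _ haW hr) (by simp)
          · obtain ⟨q', hq'⟩ := ihq.2 hr
            exact ⟨q', fun z hz => List.mem_cons_of_mem _ (hq' hz)⟩
      · intro haW
        rcases hadj a x h with ht | ht | ht
        · exact absurd (hd _ (h1 _ _ ht).1 haW) (by simp)
        · obtain ⟨q', hq'⟩ := ihq.2 (h2 _ _ ht).2
          exact ⟨q', fun z hz => List.mem_cons_of_mem _ (hq' hz)⟩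
        · rcases Sym2.eq_iff.mp ht with ⟨rfl, rfl⟩ | ⟨rfl, rfl⟩
          · obtain ⟨q', hq'⟩ := ihq.1 hw
            exact ⟨q', fun z hz => List.mem_cons_of_mem _ (hq' hz)⟩
          · exact absurd (hd _ hw haW) (by simp)

lemma cross_edge
    (h1 : ∀ a b, T₁.Adj a b → a ∈ W₁ ∧ b ∈ W₁)
    (h2 : ∀ a b, T₂.Adj a b → a ∈ W₂ ∧ b ∈ W₂)
    (hd : ∀ v, v ∈ W₁ → v ∈ W₂ → False)
    (hr : r ∈ W₂)
    (hadj : ∀ a b, T.Adj a b → T₁.Adj a b ∨ T₂.Adj a b ∨ s(a, b) = s(r, w))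
    {a b : V} (p : T.Walk a b) (ha : a ∈ W₁) (hb : b ∈ W₂) :
    s(r, w) ∈ p.edges := by
  induction p with
  | nil => exact absurd (hd _ ha hb) (by simp)
  | @cons a x b h q ih =>
      rcases hadj a x h with ht | ht | ht
      · exact List.mem_cons_of_mem _ (ih (h1 _ _ ht).2 hb)
      · exact absurd (hd _ ha (h2 _ _ ht).1) (by simp)
      · simp only [Walk.edges_cons, List.mem_cons]
        exact Or.inl ht.symm

lemma edges_in_left
    (h1 : ∀ a b, T₁.Adj a b → a ∈ W₁ ∧ b ∈ W₁)
    (h2 : ∀ a b, T₂.Adj a b → a ∈ W₂ ∧ b ∈ W₂)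
    (hd : ∀ v, v ∈ W₁ → v ∈ W₂ → False)
    (hadj : ∀ a b, T.Adj a b → T₁.Adj a b ∨ T₂.Adj a b ∨ s(a, b) = s(r, w))
    {a b : V} (p : T.Walk a b) (ha : a ∈ W₁) (hno : s(r, w) ∉ p.edges) :
    ∀ e ∈ p.edges, e ∈ T₁.edgeSet := by
  induction p with
  | nil => simp
  | @cons a x b h q ih =>
      have hnoq : s(r, w) ∉ q.edges := fun hh => hno (List.mem_cons_of_mem _ hh)
      intro e he
      rcases List.mem_cons.mp (by simpa using he) with h5 | h5
      · subst h5
        rcases hadj a x h with ht | ht | ht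
        · exact ht
        · exact absurd (hd _ ha (h2 _ _ ht).1) (by simp)
        · exact absurd (hno (by rw [← ht]; exact List.mem_cons_self)) (by simp)
      · rcases hadj a x h with ht | ht | ht
        · exact ih (h1 _ _ ht).2 hnoq e h5
        · exact absurd (hd _ ha (h2 _ _ ht).1) (by simp)
        · exact absurd (hno (by rw [← ht]; exact List.mem_cons_self)) (by simp)

end Cross
section DFS

open SimpleGraph Walk

lemma dfs_spec {G : SimpleGraph V} {W : Set V} {r : V} {T : SimpleGraph V}
    (h : IsDFSTree G W r T) :
    r ∈ W ∧ (∀ a b, T.Adj a b → G.Adj a b ∧ a ∈ W ∧ b ∈ W) ∧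
      (∀ v ∈ W, T.Reachable r v) ∧ T.IsAcyclic ∧
      (∀ a b, G.Adj a b → a ∈ W → b ∈ W → AncOf T r a b ∨ AncOf T r b a) := by
  classical
  induction h with
  | single r =>
      refine ⟨rfl, ?_, ?_, ?_, ?_⟩
      · intro a b hab; exact absurd hab (by simp)
      · intro v hv
        rcases hv with rfl
        exact Reachable.refl _
      · intro v c hc
        cases c with
        | nil => exact hc.ne_nil rfl
        | cons h0 q => exact absurd h0 (by simp)
      · intro a b hab ha hb
        rcases ha with rfl; rcases hb with rfl
        exact absurd hab (G.loopless.irrefl _)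
  | step W r w T₁ T₂ hrW hwW hGrw hT₁ hT₂ ih₁ ih₂ =>
      obtain ⟨hw₁, hTsub₁, hreach₁, hacyc₁, hdfs₁⟩ := ih₁
      obtain ⟨hr₂, hTsub₂, hreach₂, hacyc₂, hdfs₂⟩ := ih₂
      set W₁ : Set V := {u | (restrict G (W \ {r})).Reachable w u} with hW₁def
      set W₂ : Set V := W \ W₁ with hW₂def
      set T : SimpleGraph V := T₁ ⊔ T₂ ⊔ fromEdgeSet {s(r, w)} with hTdef
      have hrw_ne : r ≠ w := hGrw.ne
      have hW₁sub : ∀ u ∈ W₁, u ∈ W \ {r} := by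
        intro u hu
        rcases restrict_reachable_end hu with rfl | hh
        · exact ⟨hwW, by simpa using hrw_ne.symm⟩
        · exact hh
      have h1 : ∀ a b, T₁.Adj a b → a ∈ W₁ ∧ b ∈ W₁ :=
        fun a b hab => ⟨(hTsub₁ a b hab).2.1, (hTsub₁ a b hab).2.2⟩
      have h2 : ∀ a b, T₂.Adj a b → a ∈ W₂ ∧ b ∈ W₂ :=
        fun a b hab => ⟨(hTsub₂ a b hab).2.1, (hTsub₂ a b hab).2.2⟩
      have hd : ∀ v, v ∈ W₁ → v ∈ W₂ → False := fun v hv1 hv2 => hv2.2 hv1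
      have hd' : ∀ v, v ∈ W₂ → v ∈ W₁ → False := fun v hv1 hv2 => hv1.2 hv2
      have hadjT : ∀ a b, T.Adj a b → T₁.Adj a b ∨ T₂.Adj a b ∨ s(a, b) = s(r, w) := by
        intro a b hab
        rcases hab with (hh | hh) | hh
        · exact Or.inl hh
        · exact Or.inr (Or.inl hh)
        · exact Or.inr (Or.inr (by simpa using hh.1))
      have hadjT' : ∀ a b, T.Adj a b → T₂.Adj a b ∨ T₁.Adj a b ∨ s(a, b) = s(w, r) := by
        intro a b hab
        rcases hadjT a b hab with hh | hh | hh
        · exact Or.inr (Or.inl hh)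
        · exact Or.inl hh
        · exact Or.inr (Or.inr (by rw [hh, Sym2.eq_swap]))
      have hT1le : T₁ ≤ T := le_trans le_sup_left le_sup_left
      have hT2le : T₂ ≤ T := le_trans le_sup_right le_sup_left
      have hTrw : T.Adj r w := Or.inr (by simp [fromEdgeSet_adj, hrw_ne])
      have hTsub : ∀ a b, T.Adj a b → G.Adj a b ∧ a ∈ W ∧ b ∈ W := by
        intro a b hab
        rcases hadjT a b hab with hh | hh | hh
        · exact ⟨(hTsub₁ a b hh).1, (hW₁sub _ (h1 a b hh).1).1, (hW₁sub _ (h1 a b hh).2).1⟩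
        · exact ⟨(hTsub₂ a b hh).1, (h2 a b hh).1.1, (h2 a b hh).2.1⟩
        · rcases Sym2.eq_iff.mp hh with ⟨rfl, rfl⟩ | ⟨rfl, rfl⟩
          · exact ⟨hGrw, hrW, hwW⟩
          · exact ⟨hGrw.symm, hwW, hrW⟩
      have hreach : ∀ v ∈ W, T.Reachable r v := by
        intro v hv
        by_cases hv1 : v ∈ W₁
        · exact hTrw.reachable.trans ((hreach₁ v hv1).mono hT1le)
        · exact (hreach₂ v ⟨hv, hv1⟩).mono hT2le
      have hacyc : T.IsAcyclic := by
        intro v c hc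
        by_cases he : s(r, w) ∈ c.edges
        · have hrs : r ∈ c.support := Walk.fst_mem_support_of_mem_edges c he
          have hc' : (c.rotate r hrs).IsCycle := hc.rotate hrs
          have he' : s(r, w) ∈ (c.rotate r hrs).edges := (Walk.rotate_edges c r hrs).mem_iff.mpr he
          generalize hcc : c.rotate r hrs = c' at hc' he'
          cases c' with
          | nil => exact hc'.ne_nil rfl
          | @cons _ xx _ h0 q =>
              have hnodup : (Walk.cons h0 q).edges.Nodup := hc'.isTrail.edges_nodup
              rcases hadjT _ _ h0 with ht | ht | ht
              · exact hd r (h1 _ _ ht).1 hr₂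
              · -- first edge in T₂, so s(r,w) is in q
                have hx2 : xx ∈ W₂ := (h2 _ _ ht).2
                have hq : s(r, w) ∈ q.edges := by
                  rw [Walk.edges_cons] at he'
                  rcases List.mem_cons.mp he' with h5 | h5
                  · have hxw : xx = w := Sym2.congr_right.mp h5.symm
                    exact absurd hx2 (fun hh => hd _ (hxw ▸ hw₁) hh)
                  · exact h5
                have hws : w ∈ q.support := Walk.snd_mem_support_of_mem_edges q hq
                have hcross1 : s(w, r) ∈ (q.takeUntil w hws).edges :=
                  cross_edge h2 h1 hd' hw₁ hadjT' (q.takeUntil w hws) hx2 hw₁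
                have hcross2 : s(r, w) ∈ (q.dropUntil w hws).edges :=
                  cross_edge h1 h2 hd hr₂ hadjT (q.dropUntil w hws) hw₁ hr₂
                have hqnd : q.edges.Nodup := by
                  simp only [Walk.edges_cons, List.nodup_cons] at hnodup
                  exact hnodup.2
                have hsplit : q.edges = (q.takeUntil w hws).edges ++ (q.dropUntil w hws).edges := by
                  conv_lhs => rw [← q.take_spec hws]
                  rw [Walk.edges_append]
                rw [hsplit] at hqnd
                exact (List.disjoint_of_nodup_append hqnd) (by rwa [Sym2.eq_swap] at hcross1) hcross2
              · -- first edge is the crossing edge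
                have hxw : xx = w := by
                  rcases Sym2.eq_iff.mp ht with ⟨_, h6⟩ | ⟨h6, _⟩
                  · exact h6
                  · exact absurd h6 hrw_ne
                have hq2 : s(r, w) ∈ q.edges :=
                  cross_edge h1 h2 hd hr₂ hadjT q (by rw [hxw]; exact hw₁) hr₂
                simp only [Walk.edges_cons, List.nodup_cons] at hnodup
                exact hnodup.1 (by rw [ht]; exact hq2)
        · cases c with
          | nil => exact hc.ne_nil rfl
          | @cons _ xx _ h0 q =>
              rcases hadjT _ _ h0 with ht | ht | ht
              · have hall := edges_in_left h1 h2 hd hadjT (Walk.cons h0 q) (h1 _ _ ht).1 he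
                exact hacyc₁ _ (hc.transfer (fun e heq => hall e heq))
              · have he2 : s(w, r) ∉ (Walk.cons h0 q).edges := by rwa [Sym2.eq_swap]
                have hall := edges_in_left h2 h1 hd' hadjT' (Walk.cons h0 q) (h2 _ _ ht).1 he2
                exact hacyc₂ _ (hc.transfer (fun e heq => hall e heq))
              · exact he (by rw [← ht]; exact List.mem_cons_self)
      have lift₁ : ∀ a b, b ∈ W₁ → AncOf T₁ w a b → AncOf T r a b := by
        intro a b hb hanc p
        obtain ⟨q, hq⟩ := (cross_walk h1 h2 hd hr₂ hw₁ hadjT p hb).2 hr₂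
        exact hq (hanc q)
      have lift₂ : ∀ a b, b ∈ W₂ → AncOf T₂ r a b → AncOf T r a b := by
        intro a b hb hanc p
        obtain ⟨q, hq⟩ := (cross_walk h2 h1 hd' hw₁ hr₂ hadjT' p hb).1 hr₂
        exact hq (hanc q)
      have hcl : ∀ a b, G.Adj a b → a ∈ W₁ → b ∈ W → b ≠ r → b ∈ W₁ := by
        intro a b hab ha hb hbr
        exact ha.trans (SimpleGraph.Adj.reachable ⟨hab, hW₁sub a ha, ⟨hb, hbr⟩⟩)
      have hanc_r : ∀ b, AncOf T r r b := fun b p => p.start_mem_support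
      have hdfs : ∀ a b, G.Adj a b → a ∈ W → b ∈ W → AncOf T r a b ∨ AncOf T r b a := by
        intro a b hab ha hb
        by_cases ha1 : a ∈ W₁ <;> by_cases hb1 : b ∈ W₁
        · rcases hdfs₁ a b hab ha1 hb1 with hh | hh
          · exact Or.inl (lift₁ _ _ hb1 hh)
          · exact Or.inr (lift₁ _ _ ha1 hh)
        · by_cases hbr : b = r
          · subst hbr; exact Or.inr (hanc_r a)
          · exact absurd (hcl a b hab ha1 hb hbr) hb1
        · by_cases har : a = r
          · subst har; exact Or.inl (hanc_r b)
          · exact absurd (hcl b a hab.symm hb1 ha har) ha1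
        · rcases hdfs₂ a b hab ⟨ha, ha1⟩ ⟨hb, hb1⟩ with hh | hh
          · exact Or.inl (lift₂ _ _ ⟨hb, hb1⟩ hh)
          · exact Or.inr (lift₂ _ _ ⟨ha, ha1⟩ hh)
      exact ⟨hrW, hTsub, hreach, hacyc, hdfs⟩

end DFS
/-- for a DFS tree `T` of a connected graph `G` rooted at `r` and a vertex set
`U`, vertices `x, y ∉ U` are connected in `G \ U` iff they are in the same component of
`T \ U` or both are connected in `G \ U` to a common internal component of `T \ U`. -/
theorem stmt_4 (G : SimpleGraph V) (hG : G.Connected) (r : V) (T : SimpleGraph V)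
    (hT : IsDFSTree G Set.univ r T) (U : Set V)
    (x y : V) (hx : x ∉ U) (hy : y ∉ U) :
    (delAdj G U).Reachable x y ↔
      (delAdj T U).Reachable x y ∨
        ∃ C, InternalComp T r U C ∧ (∃ c ∈ C, (delAdj G U).Reachable x c) ∧
          ∃ c ∈ C, (delAdj G U).Reachable y c := by
  classical
  obtain ⟨-, hTsub, hreach', hacyc, hdfs⟩ := dfs_spec hT
  have hTG : T ≤ G := fun a b h => (hTsub a b h).1
  have hmono : delAdj T U ≤ delAdj G U := delAdj_mono hTG U
  have hpre : ∀ v, T.Reachable r v := fun v => hreach' v (Set.mem_univ v)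
  have hdfs' : ∀ a b, G.Adj a b → AncOf T r a b ∨ AncOf T r b a :=
    fun a b h => hdfs a b h trivial trivial
  have huniq : ∀ ⦃a b : V⦄ (p q : T.Path a b), p = q :=
    SimpleGraph.isAcyclic_iff_path_unique.mp hacyc
  let pth : ∀ v, T.Path r v := fun v => ((hpre v).some.toPath)
  have hpth : ∀ (v) (q : T.Walk r v), q.IsPath → q = (pth v).1 := fun v q hq =>
    congrArg Subtype.val (huniq ⟨q, hq⟩ (pth v))
  have hanc_iff : ∀ v z, AncOf T r z v ↔ z ∈ (pth v).1.support := by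
    intro v z
    constructor
    · intro h; exact h (pth v).1
    · intro h q
      have h2 : (q.toPath : T.Walk r v) = (pth v).1 :=
        congrArg Subtype.val (huniq q.toPath (pth v))
      rw [← h2] at h
      exact q.support_toPath_subset h
  have hanc_refl : ∀ z, AncOf T r z z := fun z p => p.end_mem_support
  have hdich : ∀ a b (hab : T.Adj a b),
      ((pth b).1 = (pth a).1.concat hab) ∨ ((pth a).1 = (pth b).1.concat hab.symm) := by
    intro a b hab
    by_cases hb : b ∈ (pth a).1.support
    · right
      have hq : ((pth a).1.takeUntil b hb).IsPath := (pth a).2.takeUntil hb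
      have heq : (pth b).1 = (pth a).1.takeUntil b hb := (hpth b _ hq).symm
      have hna : a ∉ ((pth a).1.takeUntil b hb).support :=
        end_not_mem_takeUntil (pth a).1 (pth a).2.support_nodup hb hab.ne.symm
      have hpc : (((pth a).1.takeUntil b hb).concat hab.symm).IsPath := by
        rw [SimpleGraph.Walk.isPath_def, SimpleGraph.Walk.support_concat]
        exact List.Nodup.append hq.support_nodup (by simp)
          (by simpa using hna)
      have := (hpth a _ hpc).symm
      rw [heq]
      exact this
    · left
      have hpc : ((pth a).1.concat hab).IsPath := by
        rw [SimpleGraph.Walk.isPath_def, SimpleGraph.Walk.support_concat]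
        exact List.Nodup.append (pth a).2.support_nodup (by simp) (by simpa using hb)
      exact (hpth b _ hpc).symm
  have hroot : ∀ v₀, v₀ ∉ U → ∃ ρ ∈ {z | (delAdj T U).Reachable v₀ z},
      ∀ v ∈ {z | (delAdj T U).Reachable v₀ z}, AncOf T r ρ v := by
    intro v₀ hv₀
    have hCne : ((fun z => (pth z).1.length) '' {z | (delAdj T U).Reachable v₀ z}).Nonempty :=
      ⟨_, ⟨v₀, SimpleGraph.Reachable.refl _, rfl⟩⟩
    obtain ⟨ρ, hρC, hρlen⟩ := Nat.sInf_mem hCne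
    have hmin : ∀ z, (delAdj T U).Reachable v₀ z →
        (pth ρ).1.length ≤ (pth z).1.length := by
      intro z hz
      exact le_of_eq_of_le hρlen (Nat.sInf_le ⟨z, hz, rfl⟩)
    refine ⟨ρ, hρC, ?_⟩
    have key : ∀ (c v : V) (p : (delAdj T U).Walk c v),
        (delAdj T U).Reachable v₀ c → AncOf T r ρ c → AncOf T r ρ v := by
      intro c v p
      induction p with
      | nil => exact fun _ h => h
      | @cons c d v hadj q ih =>
          intro hcC hanc
          obtain ⟨hTcd, hcU, hdU⟩ := hadj
          have hdC : (delAdj T U).Reachable v₀ d :=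
            hcC.trans (SimpleGraph.Adj.reachable ⟨hTcd, hcU, hdU⟩)
          refine ih hdC ?_
          rcases hdich _ _ hTcd with hh | hh
          · refine (hanc_iff _ _).mpr ?_
            rw [hh, SimpleGraph.Walk.support_concat]
            exact List.mem_append_left _ ((hanc_iff _ _).mp hanc)
          · have hρc : ρ ∈ (pth c).1.support := (hanc_iff _ _).mp hanc
            rw [hh, SimpleGraph.Walk.support_concat] at hρc
            rcases List.mem_append.mp hρc with h5 | h5
            · exact (hanc_iff _ _).mpr h5
            · have hρc' : ρ = c := by simpa using h5
              exfalso
              have hlen : (pth c).1.length = (pth d).1.length + 1 := by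
                rw [hh, SimpleGraph.Walk.length_concat]
              have h6 := hmin d hdC
              rw [hρc', hlen] at h6
              omega
    intro v hv
    obtain ⟨p⟩ := (hρC.symm.trans hv : (delAdj T U).Reachable ρ v)
    exact key ρ v p hρC (hanc_refl ρ)
  have hmain : ∀ a b, G.Adj a b → a ∉ U → b ∉ U → ¬(delAdj T U).Reachable a b →
      AncOf T r a b → ∃ C, InternalComp T r U C ∧ a ∈ C := by
    intro a b hab haU hbU hnr hanc
    obtain ⟨ρ, hρC, hρall⟩ := hroot a haU
    have haS : a ∈ (pth b).1.support := (hanc_iff _ _).mp hanc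
    have hUmeet : ∃ u ∈ U, u ∈ ((pth b).1.dropUntil a haS).support := by
      by_contra hcon
      push_neg at hcon
      exact hnr (reach_of_support_avoid ((pth b).1.dropUntil a haS)
        (fun z hz hzU => hcon z hzU hz))
    obtain ⟨u, huU, huD⟩ := hUmeet
    have hune : u ≠ a := fun hh => haU (hh ▸ huU)
    have huS : u ∈ (pth b).1.support := (pth b).1.support_dropUntil_subset haS huD
    have hatake : a ∈ ((pth b).1.takeUntil u huS).support :=
      mem_takeUntil_of_mem_dropUntil (pth b).1 (pth b).2.support_nodup haS huD hune huS
    have hancau : AncOf T r a u := by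
      rw [hanc_iff, ← hpth u _ ((pth b).2.takeUntil huS)]
      exact hatake
    refine ⟨{z | (delAdj T U).Reachable a z}, ⟨⟨a, haU, rfl⟩, ρ, hρC, hρall, u, huU, ?_⟩,
      SimpleGraph.Reachable.refl a⟩
    exact anc_trans (hρall a (SimpleGraph.Reachable.refl a)) hancau
  have claim : ∀ {a bb : V} (p : (delAdj G U).Walk a bb), a ∉ U →
      ((delAdj T U).Reachable a bb ∨
        ∃ C, InternalComp T r U C ∧ (∃ c ∈ C, (delAdj G U).Reachable a c) ∧
          ∃ c ∈ C, (delAdj G U).Reachable bb c) := by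
    intro a bb p
    induction p with
    | nil => exact fun _ => Or.inl (SimpleGraph.Reachable.refl _)
    | @cons a b v h q ih =>
        intro haU
        obtain ⟨hGab, haU', hbU⟩ := h
        have hedge : (delAdj G U).Adj a b := ⟨hGab, haU', hbU⟩
        rcases ih hbU with hTy | ⟨C, hC, ⟨c1, hc1, hrc1⟩, hyC⟩
        · by_cases hTab : (delAdj T U).Reachable a b
          · exact Or.inl (hTab.trans hTy)
          · rcases hdfs' _ _ hGab with hanc | hanc
            · obtain ⟨C, hCint, haC⟩ := hmain _ _ hGab haU' hbU hTab hanc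
              exact Or.inr ⟨C, hCint, ⟨a, haC, SimpleGraph.Reachable.refl a⟩,
                ⟨a, haC, (hTy.mono hmono).symm.trans hedge.reachable.symm⟩⟩
            · obtain ⟨C, hCint, hbC⟩ := hmain _ _ hGab.symm hbU haU'
                (fun hh => hTab hh.symm) hanc
              exact Or.inr ⟨C, hCint, ⟨b, hbC, hedge.reachable⟩,
                ⟨b, hbC, (hTy.mono hmono).symm⟩⟩
        · exact Or.inr ⟨C, hC, ⟨c1, hc1, hedge.reachable.trans hrc1⟩, hyC⟩
  constructor
  · intro hre
    obtain ⟨p⟩ := hre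
    exact claim p hx
  · intro h
    rcases h with hTxy | ⟨C, ⟨⟨v, hvU, rfl⟩, -⟩, ⟨c1, hc1, hxc⟩, ⟨c2, hc2, hyc⟩⟩
    · exact hTxy.mono hmono
    · have hcc : (delAdj T U).Reachable c1 c2 :=
        (hc1 : (delAdj T U).Reachable v c1).symm.trans hc2
      exact hxc.trans ((hcc.mono hmono).trans hyc.symm)
end

section
/- Let T be a DFS tree of a connected undirected graph G rooted at r, and let U be a set of k vertices. Then the number of internal components of T \ U (components whose root in T is an ancestor of some vertex of U) is at most k. -/
open SimpleGraph

variable {V : Type*}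

section Aux
open SimpleGraph Walk
variable {V : Type*}

lemma delAdj_walk_not_mem {T : SimpleGraph V} {U : Set V} :
    ∀ {a b : V}, (p : (delAdj T U).Walk a b) → a ∉ U → b ∉ U := by
  intro a b p
  induction p with
  | nil => exact id
  | cons h p ih => exact fun _ => ih (show T.Adj _ _ ∧ _ ∉ U ∧ _ ∉ U from h).2.2

lemma restrict_walk_mem {G : SimpleGraph V} {A : Set V} :
    ∀ {a b : V}, (p : (restrict G A).Walk a b) → a ∈ A → b ∈ A := by
  intro a b p
  induction p with
  | nil => exact id
  | cons h p ih => exact fun _ => ih (show G.Adj _ _ ∧ _ ∈ A ∧ _ ∈ A from h).2.2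

lemma walk_to_delAdj {T : SimpleGraph V} {U : Set V} :
    ∀ {a b : V} (p : T.Walk a b), (∀ z ∈ p.support, z ∉ U) → (delAdj T U).Reachable a b := by
  intro a b p
  induction p with
  | nil => exact fun _ => Reachable.refl _
  | @cons a c b h p ih =>
    intro hs
    have h1 : (delAdj T U).Adj a c :=
      (show T.Adj a c ∧ a ∉ U ∧ c ∉ U from
      ⟨h, hs a (by simp), hs c (by simp [Walk.support_cons, Walk.start_mem_support])⟩)
    exact h1.reachable.trans (ih fun z hz => hs z (by simp [Walk.support_cons, hz]))

lemma nodup_split [DecidableEq V] {G : SimpleGraph V} {a b z : V} (Q : G.Walk a b) (hnd : Q.support.Nodup)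
    (hz : z ∈ Q.support) {x : V} (h1 : x ∈ (Q.takeUntil z hz).support)
    (h2 : x ∈ (Q.dropUntil z hz).support) : x = z := by
  by_contra hne
  have h2' : x ∈ (Q.dropUntil z hz).support.tail := by
    have hc := Walk.support_eq_cons (Q.dropUntil z hz)
    rw [hc] at h2
    rcases List.mem_cons.mp h2 with h | h
    · exact absurd h hne
    · exact h
  rw [← Walk.take_spec Q hz, Walk.support_append, List.nodup_append] at hnd
  exact hnd.2.2 x h1 x h2' rfl

lemma walk_stay {V : Type*} {T1 Tb : SimpleGraph V} {A : Set V} {e : Sym2 V}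
    (hd : ∀ u v, Tb.Adj u v →
      s(u, v) = e ∨ (T1.Adj u v ∧ u ∈ A ∧ v ∈ A) ∨ (u ∉ A ∧ v ∉ A)) :
    ∀ {a b : V} (p : Tb.Walk a b), (∀ e' ∈ p.edges, e' ≠ e) → a ∈ A →
      b ∈ A ∧ ∀ e' ∈ p.edges, e' ∈ T1.edgeSet := by
  intro a b p
  induction p with
  | nil => exact fun _ ha => ⟨ha, by simp⟩
  | @cons a c b h p ih =>
    intro hne ha
    rcases hd _ _ h with h1 | ⟨h2, _, hc⟩ | ⟨h3, _⟩
    · exact absurd h1 (hne _ (by simp))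
    · obtain ⟨hb, hE⟩ := ih (fun e' he' => hne e' (by simp [he'])) hc
      refine ⟨hb, ?_⟩
      intro e' he'
      rcases List.mem_cons.mp (by simpa using he') with h | h
      · exact h ▸ h2
      · exact hE _ h
    · exact absurd ha h3

lemma walk_exit {V : Type*} {Tb : SimpleGraph V} {r w : V} :
    ∀ {x : V} (p : Tb.Walk x r), p.support.Nodup → s(r, w) ∈ p.edges →
      ∃ q : Tb.Walk x w, ∀ e' ∈ q.edges, e' ≠ s(r, w) := by
  intro x p
  induction p with
  | nil => simp
  | @cons x y r h p ih =>
    intro hnd he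
    by_cases hxy : s(x, y) = s(r, w)
    · rcases Sym2.eq_iff.mp hxy with ⟨hx, hy⟩ | ⟨hx, hy⟩
      · exfalso
        have : x ∈ p.support := hx ▸ Walk.end_mem_support p
        exact (List.nodup_cons.mp (by simpa using hnd)).1 this
      · exact ⟨(Walk.nil : Tb.Walk w w).copy hx.symm rfl, by simp⟩
    · have he' : s(r, w) ∈ p.edges := by
        rw [Walk.edges_cons] at he
        rcases List.mem_cons.mp he with h1 | h1
        · exact absurd h1.symm hxy
        · exact h1
      obtain ⟨q, hq⟩ := ih (List.nodup_cons.mp (by simpa using hnd)).2 he'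
      refine ⟨Walk.cons h q, ?_⟩
      intro e' he''
      rw [Walk.edges_cons] at he''
      rcases List.mem_cons.mp he'' with h1 | h1
      · exact h1 ▸ hxy
      · exact hq _ h1

lemma glue_acyclic {V : Type*} [DecidableEq V] {T₁ T₂ : SimpleGraph V} {W₁ W₂ : Set V} {r w : V}
    (h1 : ∀ u v, T₁.Adj u v → u ∈ W₁ ∧ v ∈ W₁) (h2 : ∀ u v, T₂.Adj u v → u ∈ W₂ ∧ v ∈ W₂)
    (hd : ∀ x, x ∈ W₁ → x ∉ W₂) (hr : r ∈ W₂) (hw : w ∈ W₁)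
    (a1 : T₁.IsAcyclic) (a2 : T₂.IsAcyclic) :
    (T₁ ⊔ T₂ ⊔ SimpleGraph.fromEdgeSet {s(r, w)}).IsAcyclic := by
  set Tb := T₁ ⊔ T₂ ⊔ SimpleGraph.fromEdgeSet {s(r, w)} with hTb
  have hdi1 : ∀ u v, Tb.Adj u v →
      s(u, v) = s(r, w) ∨ (T₁.Adj u v ∧ u ∈ W₁ ∧ v ∈ W₁) ∨ (u ∉ W₁ ∧ v ∉ W₁) := by
    rintro u v ((h | h) | h)
    · exact Or.inr (Or.inl ⟨h, h1 _ _ h⟩)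
    · exact Or.inr (Or.inr ⟨fun hm => hd _ hm (h2 _ _ h).1, fun hm => hd _ hm (h2 _ _ h).2⟩)
    · exact Or.inl (by simpa using ((SimpleGraph.fromEdgeSet_adj _).mp h).1)
  have hdi2 : ∀ u v, Tb.Adj u v →
      s(u, v) = s(r, w) ∨ (T₂.Adj u v ∧ u ∈ W₂ ∧ v ∈ W₂) ∨ (u ∉ W₂ ∧ v ∉ W₂) := by
    rintro u v ((h | h) | h)
    · exact Or.inr (Or.inr ⟨fun hm => (hd _ (h1 _ _ h).1 hm).elim, fun hm => (hd _ (h1 _ _ h).2 hm).elim⟩)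
    · exact Or.inr (Or.inl ⟨h, h2 _ _ h⟩)
    · exact Or.inl (by simpa using ((SimpleGraph.fromEdgeSet_adj _).mp h).1)
  intro v c hc
  by_cases he : s(r, w) ∈ c.edges
  · have hrs : r ∈ c.support := Walk.fst_mem_support_of_mem_edges c he
    have hc' : (c.rotate r hrs).IsCycle := hc.rotate hrs
    have he' : s(r, w) ∈ (c.rotate r hrs).edges := ((c.rotate_edges r hrs).perm.mem_iff).mpr he
    obtain ⟨x, hxadj, p, hpeq⟩ := Walk.not_nil_iff.mp hc'.not_nil
    rw [hpeq] at hc' he'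
    have hsup : p.support.Nodup := by
      have := hc'.support_nodup
      simpa using this
    by_cases hx1 : s(r, x) = s(r, w)
    · have hx : x = w := Sym2.congr_right.mp hx1
      have hpe : s(r, w) ∉ p.edges := by
        have htr := hc'.isCircuit.isTrail.edges_nodup
        rw [Walk.edges_cons, List.nodup_cons, hx1] at htr
        exact htr.1
      have hpe' : ∀ e' ∈ (p.copy hx rfl).edges, e' ≠ s(r, w) := by
        intro e' h' heq
        rw [Walk.edges_copy] at h'
        exact hpe (heq ▸ h')
      obtain ⟨hrW, -⟩ := walk_stay hdi1 (p.copy hx rfl) hpe' hw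
      exact hd r hrW hr
    · have hpe : s(r, w) ∈ p.edges := by
        rw [Walk.edges_cons] at he'
        rcases List.mem_cons.mp he' with h1 | h1
        · exact absurd h1.symm hx1
        · exact h1
      obtain ⟨q, hq⟩ := walk_exit p hsup hpe
      have hqe : ∀ e' ∈ (Walk.cons hxadj q).edges, e' ≠ s(r, w) := by
        intro e' he''
        rw [Walk.edges_cons] at he''
        rcases List.mem_cons.mp he'' with h1 | h1
        · exact h1 ▸ hx1
        · exact hq _ h1
      obtain ⟨hwW, -⟩ := walk_stay hdi2 (Walk.cons hxadj q) hqe hr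
      exact hd w hw hwW
  · obtain ⟨x, hxadj, p, hpeq⟩ := Walk.not_nil_iff.mp hc.not_nil
    have hfst : s(v, x) ∈ c.edges := by rw [hpeq]; simp
    have hne : ∀ e' ∈ c.edges, e' ≠ s(r, w) := fun e' h' heq => he (heq ▸ h')
    rcases hxadj with (h | h) | h
    · obtain ⟨-, hE⟩ := walk_stay hdi1 c hne (h1 _ _ h).1
      exact a1 (c.transfer T₁ hE) (hc.transfer hE)
    · obtain ⟨-, hE⟩ := walk_stay hdi2 c hne (h2 _ _ h).1
      exact a2 (c.transfer T₂ hE) (hc.transfer hE)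
    · exact hne _ hfst (by simpa using ((SimpleGraph.fromEdgeSet_adj _).mp h).1)

lemma IsDFSTree.root_mem {V : Type*} {G : SimpleGraph V} {W : Set V} {r : V} {T : SimpleGraph V}
    (h : IsDFSTree G W r T) : r ∈ W := by
  induction h with
  | single r => exact rfl
  | step W r w T₁ T₂ hr hw hadj hT₁ hT₂ ih₁ ih₂ => exact hr

lemma IsDFSTree.adj_mem {V : Type*} {G : SimpleGraph V} {W : Set V} {r : V} {T : SimpleGraph V}
    (h : IsDFSTree G W r T) : ∀ {u v : V}, T.Adj u v → u ∈ W ∧ v ∈ W := by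
  induction h with
  | single r => intro u v h; simp at h
  | step W r w T₁ T₂ hr hw hadj hT₁ hT₂ ih₁ ih₂ =>
    intro u v huv
    have hwW : w ∈ W \ {r} := ⟨hw, by simp [hadj.ne']⟩
    have hW₁ : {u | (restrict G (W \ {r})).Reachable w u} ⊆ W := by
      intro x hx
      obtain ⟨p⟩ := hx
      exact (restrict_walk_mem p hwW).1
    rcases huv with (h | h) | h
    · exact ⟨hW₁ (ih₁ h).1, hW₁ (ih₁ h).2⟩
    · exact ⟨(ih₂ h).1.1, (ih₂ h).2.1⟩
    · obtain ⟨hs, -⟩ := (SimpleGraph.fromEdgeSet_adj _).mp h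
      simp only [Set.mem_singleton_iff, Sym2.eq_iff] at hs
      rcases hs with ⟨rfl, rfl⟩ | ⟨rfl, rfl⟩
      · exact ⟨hr, hw⟩
      · exact ⟨hw, hr⟩

lemma IsDFSTree.reach {V : Type*} {G : SimpleGraph V} {W : Set V} {r : V} {T : SimpleGraph V}
    (h : IsDFSTree G W r T) : ∀ v ∈ W, T.Reachable r v := by
  induction h with
  | single r =>
    intro v hv
    rw [Set.mem_singleton_iff] at hv
    subst hv
    exact SimpleGraph.Reachable.refl v
  | step W r w T₁ T₂ hr hw hadj hT₁ hT₂ ih₁ ih₂ =>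
    intro v hv
    by_cases hv1 : v ∈ {u | (restrict G (W \ {r})).Reachable w u}
    · have h1 : T₁.Reachable w v := ih₁ v hv1
      have hle : T₁ ≤ T₁ ⊔ T₂ ⊔ SimpleGraph.fromEdgeSet {s(r, w)} :=
        le_sup_of_le_left le_sup_left
      have h2 : (T₁ ⊔ T₂ ⊔ SimpleGraph.fromEdgeSet {s(r, w)}).Adj r w :=
        Or.inr ((SimpleGraph.fromEdgeSet_adj _).mpr ⟨rfl, hadj.ne⟩)
      exact h2.reachable.trans (h1.mono hle)
    · exact (ih₂ v ⟨hv, hv1⟩).mono (le_sup_of_le_left le_sup_right)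

lemma IsDFSTree.acyclic {V : Type*} {G : SimpleGraph V} {W : Set V} {r : V} {T : SimpleGraph V}
    (h : IsDFSTree G W r T) : T.IsAcyclic := by
  classical
  induction h with
  | single r =>
    intro v c hc
    obtain ⟨x, hxadj, p, hpeq⟩ := SimpleGraph.Walk.not_nil_iff.mp hc.not_nil
    simp at hxadj
  | step W r w T₁ T₂ hr hw hadj hT₁ hT₂ ih₁ ih₂ =>
    have hwW : w ∈ W \ {r} := ⟨hw, by simp [hadj.ne']⟩
    refine glue_acyclic (fun u v h => hT₁.adj_mem h) (fun u v h => hT₂.adj_mem h)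
      (fun x hx hx2 => hx2.2 hx) ⟨hr, ?_⟩ (SimpleGraph.Reachable.refl w) ih₁ ih₂
    intro hmem
    obtain ⟨p⟩ := hmem
    exact (restrict_walk_mem p hwW).2 rfl

lemma anc_antisymm {V : Type*} [DecidableEq V] {T : SimpleGraph V} {r a b : V}
    (hrb : T.Reachable r b) (hab : AncOf T r a b) (hba : AncOf T r b a) : a = b := by
  obtain ⟨p0⟩ := hrb
  set p := p0.bypass with hp
  have hpp : p.IsPath := p0.bypass_isPath
  have hap : a ∈ p.support := hab p
  have hbt : b ∈ (p.takeUntil a hap).support := hba _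
  exact (nodup_split p hpp.support_nodup hap hbt (SimpleGraph.Walk.end_mem_support _)).symm

end Aux
/-- for a DFS tree `T` of a connected graph `G` rooted at `r` and a set `U` of
`k` vertices, the number of internal components of `T \ U` is at most `k`. -/
theorem stmt_5 [Fintype V] (G : SimpleGraph V) (hG : G.Connected) (r : V)
    (T : SimpleGraph V) (hT : IsDFSTree G Set.univ r T)
    (k : ℕ) (U : Set V) (hU : U.ncard = k) :
    {C : Set V | InternalComp T r U C}.ncard ≤ k := by
  classical
  have hconn : ∀ v, T.Reachable r v := fun v => hT.reach v (Set.mem_univ v)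
  have hacy : T.IsAcyclic := hT.acyclic
  have huniq : ∀ {v : V} (p q : T.Walk r v), p.IsPath → q.IsPath → p = q := by
    intro v p q hp hq
    exact congrArg Subtype.val (hacy.path_unique ⟨p, hp⟩ ⟨q, hq⟩)
  have hanc_of_mem : ∀ {u' : V} (P : T.Walk r u'), P.IsPath →
      ∀ x ∈ P.support, AncOf T r x u' := by
    intro u' P hP x hx q
    have hb : q.bypass = P := huniq q.bypass P q.bypass_isPath hP
    exact Walk.support_bypass_subset q (hb ▸ hx)
  have hC_not_U : ∀ C, IsComp T U C → ∀ y ∈ C, y ∉ U := by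
    intro C hC y hy
    obtain ⟨v0, hv0, rfl⟩ := hC
    obtain ⟨p⟩ := hy
    exact delAdj_walk_not_mem p hv0
  have hcomp_eq : ∀ C₁ C₂, IsComp T U C₁ → IsComp T U C₂ → ∀ y, y ∈ C₁ → y ∈ C₂ →
      C₁ = C₂ := by
    intro C₁ C₂ h₁ h₂ y hy₁ hy₂
    obtain ⟨v₁, hv₁, rfl⟩ := h₁
    obtain ⟨v₂, hv₂, rfl⟩ := h₂
    simp only [Set.mem_setOf_eq] at hy₁ hy₂
    ext z
    simp only [Set.mem_setOf_eq]
    exact ⟨fun h => hy₂.trans (hy₁.symm.trans h), fun h => hy₁.trans (hy₂.symm.trans h)⟩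
  have hexists : ∀ C, InternalComp T r U C →
      ∃ u, u ∈ U ∧ ∃ y, y ∈ C ∧ T.Adj y u ∧ AncOf T r y u := by
    intro C hC
    obtain ⟨hcomp, ρ, hρC, hρanc, u0, hu0U, hρu0⟩ := hC
    have hρU : ρ ∉ U := hC_not_U C hcomp ρ hρC
    obtain ⟨u', ⟨hu'U, hu'anc⟩, hmin⟩ := Set.exists_min_image {u | u ∈ U ∧ AncOf T r ρ u}
      (fun u => T.dist r u) (Set.toFinite _) ⟨u0, hu0U, hρu0⟩
    obtain ⟨P, hPpath, hPlen⟩ := (hconn u').exists_path_of_dist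
    have hρP : ρ ∈ P.support := hu'anc P
    have hρu' : ρ ≠ u' := fun h => hρU (h ▸ hu'U)
    have hQpath : (P.dropUntil ρ hρP).IsPath := hPpath.dropUntil hρP
    set Q := P.dropUntil ρ hρP with hQdef
    have hkey : ∀ z ∈ Q.support, z ≠ u' → z ∉ U := by
      intro z hz hzne hzU
      have hanc_z : AncOf T r ρ z := by
        intro q
        have happ : ρ ∈ (q.append (Q.dropUntil z hz)).support := hu'anc _
        rw [Walk.mem_support_append_iff] at happ
        rcases happ with h | h
        · exact h
        · have hρz : ρ = z :=
            nodup_split Q hQpath.support_nodup hz (Walk.start_mem_support _) h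
          exact absurd (by rw [hρz]; exact hzU) hρU
      have hzP : z ∈ P.support := Walk.support_dropUntil_subset P hρP hz
      have h1 : T.dist r z ≤ (P.takeUntil z hzP).length := SimpleGraph.dist_le _
      have h2 : (P.takeUntil z hzP).length < P.length := by
        have hts := congrArg Walk.length (Walk.take_spec P hzP)
        rw [Walk.length_append] at hts
        have hdp : 0 < (P.dropUntil z hzP).length := by
          rw [← Walk.not_nil_iff_lt_length]
          exact Walk.not_nil_of_ne hzne
        omega
      have h3 : T.dist r u' ≤ T.dist r z := hmin z ⟨hzU, hanc_z⟩
      omega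
    have hQrev : ¬ Q.reverse.Nil := Walk.not_nil_of_ne (Ne.symm hρu')
    obtain ⟨y, hadj, q', hq'⟩ := Walk.not_nil_iff.mp hQrev
    have hyQ : y ∈ Q.support := by
      have h1 : y ∈ Q.reverse.support := by
        rw [hq', Walk.support_cons]
        exact List.mem_cons.mpr (Or.inr (Walk.start_mem_support q'))
      rwa [Walk.support_reverse, List.mem_reverse] at h1
    have hyu' : y ≠ u' := hadj.ne'
    have hyU : y ∉ U := hkey y hyQ hyu'
    have hyanc : AncOf T r y u' :=
      hanc_of_mem P hPpath y (Walk.support_dropUntil_subset P hρP hyQ)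
    have hsupU : ∀ z ∈ (Q.takeUntil y hyQ).support, z ∉ U := by
      intro z hz
      refine hkey z (Walk.support_takeUntil_subset Q hyQ hz) ?_
      rintro rfl
      exact hyu' (nodup_split Q hQpath.support_nodup hyQ hz (Walk.end_mem_support _)).symm
    have hreach : (delAdj T U).Reachable ρ y := walk_to_delAdj (Q.takeUntil y hyQ) hsupU
    obtain ⟨v0, hv0, hCeq⟩ := hcomp
    have hyC : y ∈ C := by
      rw [hCeq]
      have hρ' : (delAdj T U).Reachable v0 ρ := by rw [hCeq] at hρC; exact hρC
      exact hρ'.trans hreach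
    exact ⟨u', hu'U, y, hyC, hadj.symm, hyanc⟩
  have huniq_y : ∀ u y₁ y₂, y₁ ∉ U → y₂ ∉ U → u ∈ U → T.Adj y₁ u → T.Adj y₂ u →
      AncOf T r y₁ u → AncOf T r y₂ u → y₁ = y₂ := by
    intro u y₁ y₂ h₁U h₂U huU ha₁ ha₂ hanc₁ hanc₂
    have h12 : AncOf T r y₂ y₁ := by
      intro q
      have hm := hanc₂ (q.concat ha₁)
      rw [Walk.support_concat] at hm
      rcases List.mem_append.mp hm with h | h
      · exact h
      · exact absurd (List.mem_singleton.mp h ▸ h₂U) (fun hh => hh huU)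
    have h21 : AncOf T r y₁ y₂ := by
      intro q
      have hm := hanc₁ (q.concat ha₂)
      rw [Walk.support_concat] at hm
      rcases List.mem_append.mp hm with h | h
      · exact h
      · exact absurd (List.mem_singleton.mp h ▸ h₁U) (fun hh => hh huU)
    exact anc_antisymm (hconn y₂) h21 h12
  set f : Set V → V := fun C =>
    if h : ∃ u, u ∈ U ∧ ∃ y, y ∈ C ∧ T.Adj y u ∧ AncOf T r y u then h.choose else r
    with hfdef
  have hfU : ∀ C, InternalComp T r U C →
      f C ∈ U ∧ ∃ y, y ∈ C ∧ T.Adj y (f C) ∧ AncOf T r y (f C) := by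
    intro C hC
    have h := hexists C hC
    simp only [hfdef, dif_pos h]
    exact h.choose_spec
  refine le_trans (Set.ncard_le_ncard_of_injOn f (fun C hC => (hfU C hC).1) ?_
    (Set.toFinite U)) (le_of_eq hU)
  intro C₁ h₁ C₂ h₂ hf
  obtain ⟨hu₁, y₁, hy₁C, hadj₁, hanc₁⟩ := hfU C₁ h₁
  obtain ⟨hu₂, y₂, hy₂C, hadj₂, hanc₂⟩ := hfU C₂ h₂
  have hy12 : y₁ = y₂ := huniq_y (f C₂) y₁ y₂ (hC_not_U C₁ h₁.1 y₁ hy₁C)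
    (hC_not_U C₂ h₂.1 y₂ hy₂C) hu₂ (hf ▸ hadj₁) hadj₂ (hf ▸ hanc₁) hanc₂
  exact hcomp_eq C₁ C₂ h₁.1 h₂.1 y₁ hy₁C (by rw [hy12]; exact hy₂C)
end

section
/- Let S be a k-shredder of G with partition (C, R) where C is the largest-volume component and vol(R) ≤ ν, and suppose S is high-degree, i.e., every vertex of S has degree greater than ν. Let y be a vertex of a component Q of R. Then the set of vertices reachable from y in the subgraph of G induced on vertices of degree at most ν is exactly Q. -/
open SimpleGraph

variable {V : Type*}

lemma delAdj_reach_not_mem {G : SimpleGraph V} {S : Set V} :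
    ∀ {v u : V}, (delAdj G S).Reachable v u → v ∉ S → u ∉ S := by
  intro v u h hv
  obtain ⟨p⟩ := h
  induction p with
  | nil => exact hv
  | cons h p ih => exact ih h.2.2

lemma closed_walk_mem {H : SimpleGraph V} {Q : Set V}
    (hcl : ∀ a w, a ∈ Q → H.Adj a w → w ∈ Q) :
    ∀ {a b}, H.Walk a b → a ∈ Q → b ∈ Q := by
  intro a b p
  induction p with
  | nil => exact id
  | cons h p ih => exact fun ha => ih (hcl _ _ ha h)

lemma walk_to_reachable {H K : SimpleGraph V} {Q : Set V}
    (hcl : ∀ a w, a ∈ Q → H.Adj a w → w ∈ Q)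
    (hadj : ∀ a w, a ∈ Q → w ∈ Q → H.Adj a w → K.Adj a w) :
    ∀ {a b}, H.Walk a b → a ∈ Q → K.Reachable a b := by
  intro a b p
  induction p with
  | nil => exact fun _ => Reachable.refl _
  | cons h p ih =>
      intro ha
      have hw := hcl _ _ ha h
      exact (hadj _ _ ha hw h).reachable.trans (ih hw)

lemma degree_le_vol [Fintype V] [DecidableEq V] (G : SimpleGraph V) [DecidableRel G.Adj]
    {R : Set V} {u : V} (hu : u ∈ R) : G.degree u ≤ vol G R := by
  classical
  rw [vol, Set.ncard_eq_toFinset_card', ← SimpleGraph.card_neighborFinset_eq_degree]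
  apply Finset.card_le_card_of_injOn (fun w => s(u, w))
  · intro w hw
    rw [Finset.mem_coe, SimpleGraph.mem_neighborFinset] at hw
    simp only [Finset.mem_coe, Set.mem_toFinset, Set.mem_setOf_eq]
    exact ⟨hw, u, hu, Sym2.mem_mk_left u w⟩
  · intro w₁ _ w₂ _ h
    exact Sym2.congr_right.mp h

/-- let `S` be a high-degree `k`-shredder (every vertex of `S` has degree `> ν`)
whose non-largest components `R` satisfy `vol(R) ≤ ν`, and let `y` belong to a component
`Q ≠ C` of `G \ S`.  Then the set of vertices reachable from `y` in the subgraph of `G`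
induced on the vertices of degree at most `ν` is exactly `Q`. -/
theorem stmt_18 [Fintype V] [DecidableEq V] (G : SimpleGraph V) [DecidableRel G.Adj]
    (k ν : ℕ) (hν : 0 < ν) (hG : KConnected G k)
    (S C : Set V) (hS : IsShredder G k S) (hC : IsComp G S C)
    (hCmax : ∀ C', IsComp G S C' → vol G C' ≤ vol G C)
    (hR : vol G ((C ∪ S)ᶜ) ≤ ν)
    (hhigh : ∀ s ∈ S, ν < G.degree s)
    (Q : Set V) (hQ : IsComp G S Q) (hQC : Q ≠ C)
    (y : V) (hy : y ∈ Q) :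
    {u | (restrict G {v | G.degree v ≤ ν}).Reachable y u} = Q := by
  classical
  obtain ⟨v, hvS, hQdef⟩ := hQ
  obtain ⟨c, hcS, hCdef⟩ := hC
  subst hQdef
  -- Q is disjoint from S
  have hQnS : ∀ u, (delAdj G S).Reachable v u → u ∉ S :=
    fun u h => delAdj_reach_not_mem h hvS
  -- Q is disjoint from C
  have hQnC : ∀ u, (delAdj G S).Reachable v u → u ∉ C := by
    intro u hvu hC
    apply hQC
    rw [hCdef] at hC ⊢
    ext w
    simp only [Set.mem_setOf_eq]
    exact ⟨fun h => hC.trans (hvu.symm.trans h), fun h => hvu.trans (hC.symm.trans h)⟩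
  -- every vertex of Q has degree ≤ ν
  have hdeg : ∀ u, (delAdj G S).Reachable v u → G.degree u ≤ ν := by
    intro u hu
    refine le_trans (degree_le_vol G ?_) hR
    simp only [Set.mem_compl_iff, Set.mem_union]
    exact fun h => h.elim (hQnC u hu) (hQnS u hu)
  -- Q is closed under delAdj adjacency
  have hclQ : ∀ a w, a ∈ {u | (delAdj G S).Reachable v u} → (delAdj G S).Adj a w →
      w ∈ {u | (delAdj G S).Reachable v u} :=
    fun a w ha h => Reachable.trans ha h.reachable
  -- Q is closed under restrict adjacency
  have hclR : ∀ a w, a ∈ {u | (delAdj G S).Reachable v u} →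
      (restrict G {x | G.degree x ≤ ν}).Adj a w → w ∈ {u | (delAdj G S).Reachable v u} := by
    intro a w ha h
    have hwS : w ∉ S := fun hw => absurd h.2.2 (not_le.mpr (hhigh w hw))
    exact Reachable.trans ha (SimpleGraph.Adj.reachable ⟨h.1, hQnS a ha, hwS⟩)
  ext u
  simp only [Set.mem_setOf_eq]
  constructor
  · intro h
    obtain ⟨p⟩ := h
    exact closed_walk_mem hclR p hy
  · intro hu
    have hyu : (delAdj G S).Reachable y u := hy.symm.trans hu
    obtain ⟨p⟩ := hyu
    refine walk_to_reachable hclQ ?_ p hy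
    intro a w ha hw h
    exact ⟨h.1, hdeg a ha, hdeg w hw⟩
end
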